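/- arXiv:1505.03768 — 3 statements merged into one kernel-verified Lean document; each statement's English description precedes it below -/
import Mathlib

section
/- Let β be a real number with 0 ≤ β ≤ 1 and let 0 < x < 1/2. Then 1 - βx + 2^{1-β}β(β-1)x² ≤ (1-x)^β ≤ 1 - βx. -/
open Real

private lemma key_pointwise (β : ℝ) (hβ0 : 0 ≤ β) (hβ1 : β ≤ 1) {u : ℝ}
    (hu : 1 / 2 ≤ u) (hu1 : u ≤ 1) :
    u ^ (β - 1) ≤ 1 + (1 - β) * 2 ^ (2 - β) * (1 - u) := by
  have hu0 : (0 : ℝ) < u := by linarith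
  -- Bernoulli with exponent 2 - β ≥ 1
  have hb : (2 - β) * u - (1 - β) ≤ u ^ (2 - β) := by
    have := one_add_mul_self_le_rpow_one_add (s := u - 1) (by linarith) (p := 2 - β)
      (by linarith)
    have e : (1 : ℝ) + (u - 1) = u := by ring
    rw [e] at this
    nlinarith [this]
  have hv : (0 : ℝ) < u ^ (β - 2) := Real.rpow_pos_of_pos hu0 _
  -- step 2 : u ^ (β - 1) - 1 ≤ (1 - β) * u ^ (β - 2) * (1 - u)
  have h1 : u ^ (β - 1) = u * u ^ (β - 2) := by
    rw [show β - 1 = 1 + (β - 2) by ring, Real.rpow_add hu0, Real.rpow_one]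
  have h2 : u ^ (2 - β) * u ^ (β - 2) = 1 := by
    rw [← Real.rpow_add hu0]; norm_num
  have step2 : u ^ (β - 1) - 1 ≤ (1 - β) * u ^ (β - 2) * (1 - u) := by
    rw [h1]
    nlinarith [mul_le_mul_of_nonneg_right hb hv.le, h2]
  -- step 3 : u ^ (β - 2) ≤ 2 ^ (2 - β)
  have step3 : u ^ (β - 2) ≤ 2 ^ (2 - β) := by
    have : u ^ (β - 2) ≤ (1 / 2 : ℝ) ^ (β - 2) :=
      Real.rpow_le_rpow_of_nonpos (by norm_num) hu (by linarith)
    refine this.trans_eq ?_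
    rw [one_div, Real.inv_rpow (by norm_num), ← Real.rpow_neg (by norm_num)]
    norm_num
  have hmul : (1 - β) * u ^ (β - 2) * (1 - u) ≤ (1 - β) * 2 ^ (2 - β) * (1 - u) := by
    have h1u : (0 : ℝ) ≤ 1 - u := by linarith
    have h1β : (0 : ℝ) ≤ 1 - β := by linarith
    exact mul_le_mul_of_nonneg_right (mul_le_mul_of_nonneg_left step3 h1β) h1u
  linarith [step2, hmul]

theorem rpow_one_sub_bounds_beta_in_unit (β x : ℝ) (hβ0 : 0 ≤ β) (hβ1 : β ≤ 1)
    (hx0 : 0 < x) (hx1 : x < 1 / 2) :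
    1 - β * x + 2 ^ (1 - β) * β * (β - 1) * x ^ 2 ≤ (1 - x) ^ β ∧
    (1 - x) ^ β ≤ 1 - β * x := by
  constructor
  · -- lower bound via monotonicity of h
    set c : ℝ := 2 ^ (1 - β) * β * (1 - β) with hc
    have hcnn : 0 ≤ c := by
      have : (0:ℝ) ≤ (2:ℝ) ^ (1 - β) := (Real.rpow_pos_of_pos two_pos _).le
      have h1β : (0:ℝ) ≤ 1 - β := by linarith
      positivity
    set h : ℝ → ℝ := fun t => (1 - t) ^ β + β * t + c * t ^ 2 with hh
    have hderiv : ∀ t ∈ Set.Ioo (0 : ℝ) x, HasDerivAt h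
        (β * (1 - t) ^ (β - 1) * (-1) + β + c * (2 * t)) t := by
      intro t ht
      have h1t : (0:ℝ) < 1 - t := by
        have := ht.2; linarith
      have d1 : HasDerivAt (fun t : ℝ => (1 - t) ^ β) (β * (1 - t) ^ (β - 1) * (-1)) t := by
        have := (Real.hasDerivAt_rpow_const (x := 1 - t) (p := β) (Or.inl h1t.ne')).comp t
          ((hasDerivAt_id t).const_sub 1)
        simpa [mul_comm, Function.comp_def] using this
      have d2 : HasDerivAt (fun t : ℝ => β * t) β t := by
        simpa using (hasDerivAt_id t).const_mul β
      have d3 : HasDerivAt (fun t : ℝ => c * t ^ 2) (c * (2 * t)) t := by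
        have := ((hasDerivAt_pow 2 t)).const_mul c
        simpa [mul_comm, mul_assoc] using this
      exact (d1.add d2).add d3
    have hcont : ContinuousOn h (Set.Icc 0 x) := by
      apply ContinuousOn.add
      apply ContinuousOn.add
      · apply ContinuousOn.rpow_const
        · exact (continuous_const.sub continuous_id).continuousOn
        · intro t ht
          left
          have := ht.2
          have : t < 1 / 2 := lt_of_le_of_lt this hx1
          intro hcon
          have : (1:ℝ) - t > 0 := by linarith
          linarith [hcon ▸ this]
      · exact (continuous_const.mul continuous_id).continuousOn
      · exact (continuous_const.mul (continuous_pow 2)).continuousOn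
    have hmono : MonotoneOn h (Set.Icc 0 x) := by
      apply monotoneOn_of_deriv_nonneg (convex_Icc 0 x) hcont
      · rw [interior_Icc]
        intro t ht
        exact (hderiv t ht).differentiableAt.differentiableWithinAt
      · rw [interior_Icc]
        intro t ht
        rw [(hderiv t ht).deriv]
        have ht0 : 0 < t := ht.1
        have htx : t < x := ht.2
        have hu : 1 / 2 ≤ 1 - t := by linarith
        have hu1 : 1 - t ≤ 1 := by linarith
        have hkey := key_pointwise β hβ0 hβ1 hu hu1
        -- β * ((1-t)^(β-1) - 1) ≤ β * (1-β) * 2^(2-β) * t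
        have hβmul : β * ((1 - t) ^ (β - 1)) ≤ β * (1 + (1 - β) * 2 ^ (2 - β) * t) := by
          apply mul_le_mul_of_nonneg_left _ hβ0
          have : (1:ℝ) - (1 - t) = t := by ring
          rw [this] at hkey
          exact hkey
        have h2c : 2 * c = β * ((1 - β) * 2 ^ (2 - β)) := by
          rw [hc]
          have : (2:ℝ) ^ (2 - β) = 2 * 2 ^ (1 - β) := by
            rw [show (2:ℝ) - β = 1 + (1 - β) by ring, Real.rpow_add two_pos, Real.rpow_one]
          rw [this]; ring
        nlinarith [hβmul]
    have h0x : h 0 ≤ h x := hmono (Set.mem_Icc.mpr ⟨le_refl 0, hx0.le⟩)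
      (Set.mem_Icc.mpr ⟨hx0.le, le_refl x⟩) hx0.le
    have hh0 : h 0 = 1 := by simp [hh]
    have hhx : h x = (1 - x) ^ β + β * x + c * x ^ 2 := rfl
    rw [hh0, hhx] at h0x
    have : 2 ^ (1 - β) * β * (β - 1) * x ^ 2 = -(c * x ^ 2) := by rw [hc]; ring
    linarith [h0x, this ▸ le_refl (2 ^ (1 - β) * β * (β - 1) * x ^ 2)]
  · -- upper bound : Bernoulli
    have := rpow_one_add_le_one_add_mul_self (s := -x) (by linarith) hβ0 hβ1
    have e : (1:ℝ) + -x = 1 - x := by ring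
    rw [e] at this
    linarith [this]
end

section
/- Let β be a real number with β < 0 or 1 ≤ β ≤ 2, and let 0 < x < 1/2. Then 1 - βx ≤ (1-x)^β ≤ 1 - βx + 2^{1-β}β(β-1)x². -/
open Set Real

private lemma hasDerivAt_one_sub_rpow (p y : ℝ) (h : (1:ℝ) - y ≠ 0) :
    HasDerivAt (fun z : ℝ => (1 - z) ^ p) (-p * (1 - y) ^ (p - 1)) y := by
  have h1 : HasDerivAt (fun z : ℝ => 1 - z) (-1) y := (hasDerivAt_id y).const_sub 1
  have h2 := h1.rpow_const (p := p) (Or.inl h)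
  convert h2 using 1
  ring

private lemma mono_aux {f f' : ℝ → ℝ} {a b : ℝ} (hab : a ≤ b)
    (hd : ∀ y ∈ Set.Icc a b, HasDerivAt f (f' y) y)
    (h0 : ∀ y ∈ Set.Ioo a b, 0 ≤ f' y) :
    f a ≤ f b := by
  rcases eq_or_lt_of_le hab with rfl | hab
  · exact le_rfl
  have hc : ContinuousOn f (Set.Icc a b) :=
    fun y hy => (hd y hy).continuousAt.continuousWithinAt
  have hm := monotoneOn_of_deriv_nonneg (convex_Icc a b) hc
    (fun y hy => by
      rw [interior_Icc] at hy
      exact (hd y (Set.Ioo_subset_Icc_self hy)).differentiableAt.differentiableWithinAt)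
    (fun y hy => by
      rw [interior_Icc] at hy
      rw [(hd y (Set.Ioo_subset_Icc_self hy)).deriv]
      exact h0 y hy)
  exact hm (Set.left_mem_Icc.2 hab.le) (Set.right_mem_Icc.2 hab.le) hab.le

theorem rpow_one_sub_bounds_beta_neg_or_one_two (β x : ℝ)
    (hβ : β < 0 ∨ (1 ≤ β ∧ β ≤ 2)) (hx0 : 0 < x) (hx1 : x < 1 / 2) :
    1 - β * x ≤ (1 - x) ^ β ∧
    (1 - x) ^ β ≤ 1 - β * x + 2 ^ (1 - β) * β * (β - 1) * x ^ 2 := by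
  have hβ2 : β ≤ 2 := by rcases hβ with h | ⟨_, h⟩ <;> linarith
  have hββ : 0 ≤ β * (β - 1) := by
    rcases hβ with h | ⟨h1, _⟩
    · exact (mul_pos_of_neg_of_neg h (by linarith)).le
    · exact mul_nonneg (by linarith) (by linarith)
  have hyb : ∀ y ∈ Set.Icc 0 x, (1:ℝ)/2 < 1 - y ∧ 1 - y ≤ 1 := by
    intro y hy
    constructor <;> [linarith [hy.2]; linarith [hy.1]]
  -- key inequality: (1-z)^(β-2) ≤ 2^(1-β) * 2
  have hkey : ∀ z ∈ Set.Icc 0 x, (1 - z) ^ (β - 1 - 1) ≤ 2 ^ (1 - β) * 2 := by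
    intro z hz
    obtain ⟨hl, hu⟩ := hyb z hz
    have h2 : (1 - z) ^ (β - 1 - 1) ≤ ((1:ℝ)/2) ^ (β - 1 - 1) :=
      Real.rpow_le_rpow_of_nonpos (by norm_num) (by linarith) (by linarith)
    have h3 : ((1:ℝ)/2) ^ (β - 1 - 1) = 2 ^ (1 - β) * 2 := by
      rw [one_div, Real.inv_rpow (by norm_num : (0:ℝ) ≤ 2),
        ← Real.rpow_neg (by norm_num : (0:ℝ) ≤ 2),
        show -(β - 1 - 1) = (1 - β) + 1 by ring,
        Real.rpow_add (by norm_num : (0:ℝ) < 2), Real.rpow_one]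
    linarith
  constructor
  · -- lower bound
    have key := mono_aux (f := fun y => (1 - y) ^ β - (1 - β * y))
      (f' := fun y => -β * (1 - y) ^ (β - 1) - (-β)) hx0.le
      (fun y hy => by
        have h1 : (0:ℝ) < 1 - y := by linarith [(hyb y hy).1]
        have hd1 := hasDerivAt_one_sub_rpow β y h1.ne'
        have hd2 : HasDerivAt (fun y : ℝ => 1 - β * y) (-β) y := by
          simpa using ((hasDerivAt_id y).const_mul β).const_sub 1
        exact hd1.sub hd2)
      (fun y hy => by
        obtain ⟨hl, hu⟩ := hyb y (Set.Ioo_subset_Icc_self hy)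
        have h1 : (0:ℝ) < 1 - y := by linarith
        show 0 ≤ -β * (1 - y) ^ (β - 1) - (-β)
        have heq : -β * (1 - y) ^ (β - 1) - (-β) = β * (1 - (1 - y) ^ (β - 1)) := by ring
        rw [heq]
        rcases hβ with h | ⟨h1', _⟩
        · have : 1 ≤ (1 - y) ^ (β - 1) :=
            Real.one_le_rpow_of_pos_of_le_one_of_nonpos h1 hu (by linarith)
          nlinarith [h.le]
        · have : (1 - y) ^ (β - 1) ≤ 1 := Real.rpow_le_one h1.le hu (by linarith)
          exact mul_nonneg (by linarith) (by linarith))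
    have h0 : ((1:ℝ) - 0) ^ β - (1 - β * 0) = 0 := by simp
    rw [h0] at key
    linarith
  · -- upper bound
    -- g2 is the derivative of the difference function
    have hd2 : ∀ y ∈ Set.Icc 0 x, HasDerivAt
        (fun y : ℝ => (-β + 2 ^ (1 - β) * β * (β - 1) * (2 * y)) - (-β * (1 - y) ^ (β - 1)))
        ((2 ^ (1 - β) * β * (β - 1) * 2) - (-β * (-(β - 1) * (1 - y) ^ (β - 1 - 1)))) y := by
      intro y hy
      have h1 : (0:ℝ) < 1 - y := by linarith [(hyb y hy).1]
      have hA : HasDerivAt (fun y : ℝ => -β + 2 ^ (1 - β) * β * (β - 1) * (2 * y))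
          (2 ^ (1 - β) * β * (β - 1) * 2) y := by
        have := (((hasDerivAt_id y).const_mul 2).const_mul
          (2 ^ (1 - β) * β * (β - 1))).const_add (-β)
        exact this.congr_deriv (by ring)
      have hB := (hasDerivAt_one_sub_rpow (β - 1) y h1.ne').const_mul (-β)
      exact hA.sub hB
    have hg2nn : ∀ y ∈ Set.Ioo 0 x, 0 ≤
        (fun y : ℝ => (-β + 2 ^ (1 - β) * β * (β - 1) * (2 * y)) - (-β * (1 - y) ^ (β - 1))) y := by
      intro y hy
      have key := mono_aux (hab := hy.1.le)
        (hd := fun z hz => hd2 z ⟨hz.1, hz.2.trans hy.2.le⟩)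
        (h0 := fun z hz => by
          have hz' : z ∈ Set.Icc 0 x := ⟨hz.1.le, (hz.2.trans hy.2).le⟩
          show 0 ≤ (2 ^ (1 - β) * β * (β - 1) * 2) - (-β * (-(β - 1) * (1 - z) ^ (β - 1 - 1)))
          have heq : (2 ^ (1 - β) * β * (β - 1) * 2) - (-β * (-(β - 1) * (1 - z) ^ (β - 1 - 1)))
              = β * (β - 1) * (2 ^ (1 - β) * 2 - (1 - z) ^ (β - 1 - 1)) := by ring
          rw [heq]
          exact mul_nonneg hββ (by linarith [hkey z hz']))
      have hg20 : (-β + 2 ^ (1 - β) * β * (β - 1) * (2 * 0)) - (-β * ((1:ℝ) - 0) ^ (β - 1)) = 0 := by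
        simp
      simp only at key ⊢
      rw [hg20] at key
      exact key
    have key := mono_aux
      (f := fun y => (1 - β * y + 2 ^ (1 - β) * β * (β - 1) * y ^ 2) - (1 - y) ^ β)
      (f' := fun y => (-β + 2 ^ (1 - β) * β * (β - 1) * (2 * y)) - (-β * (1 - y) ^ (β - 1)))
      hx0.le
      (fun y hy => by
        have h1 : (0:ℝ) < 1 - y := by linarith [(hyb y hy).1]
        have hda := hasDerivAt_one_sub_rpow β y h1.ne'
        have hdb : HasDerivAt (fun y : ℝ => 1 - β * y) (-β) y := by
          simpa using ((hasDerivAt_id y).const_mul β).const_sub 1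
        have hdc : HasDerivAt (fun y : ℝ => 2 ^ (1 - β) * β * (β - 1) * y ^ 2)
            (2 ^ (1 - β) * β * (β - 1) * (2 * y)) y := by
          have := (hasDerivAt_pow 2 y).const_mul (2 ^ (1 - β) * β * (β - 1))
          exact this.congr_deriv (by push_cast; ring)
        exact (hdb.add hdc).sub hda)
      hg2nn
    have h0 : (1 - β * 0 + 2 ^ (1 - β) * β * (β - 1) * 0 ^ 2) - ((1:ℝ) - 0) ^ β = 0 := by
      simp
    rw [h0] at key
    linarith
end

section
/- Let c : (0,∞) → (0,∞) be regularly varying with index γ > -1, and suppose c is locally integrable on (0,∞) with ∫₀^{t₀} c(s) ds < ∞ for some t₀ > 0. Then lim_{t→∞} t·c(t)/∫_{t₀}^t c(s) ds = γ + 1. -/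
open Filter MeasureTheory Set

/-- preimage of a null set under multiplication by a nonzero constant is null -/
lemma null_preimage_mul {a : ℝ} (ha : a ≠ 0) {N : Set ℝ} (hN : volume N = 0) :
    volume ((fun x => a * x) ⁻¹' N) = 0 := by
  obtain ⟨N', hNN', hN'meas, hN'⟩ := exists_measurable_superset_of_null hN
  have h1 : (fun x => a * x) ⁻¹' N ⊆ (fun x => a * x) ⁻¹' N' := preimage_mono hNN'
  refine measure_mono_null h1 ?_
  have := Real.map_volume_mul_left ha
  have h2 : volume ((a * ·) ⁻¹' N') = Measure.map (a * ·) volume N' := by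
    rw [Measure.map_apply (measurable_const_mul a) hN'meas]
  rw [show ((fun x => a * x) ⁻¹' N') = ((a * ·) ⁻¹' N') from rfl, h2, this]
  simp [hN']

lemma vol_preimage_mul {a : ℝ} (ha : a ≠ 0) {S : Set ℝ} (hS : MeasurableSet S) :
    volume ((fun x => a * x) ⁻¹' S) = ENNReal.ofReal |a⁻¹| * volume S := by
  have h2 : volume ((a * ·) ⁻¹' S) = Measure.map (a * ·) volume S := by
    rw [Measure.map_apply (measurable_const_mul a) hS]
  rw [show ((fun x => a * x) ⁻¹' S) = ((a * ·) ⁻¹' S) from rfl, h2,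
    Real.map_volume_mul_left ha]
  rfl

/-- bounds for rpow on [1,4] -/
lemma rpow_mem_bounds {v : ℝ} (γ : ℝ) (h1 : 1 ≤ v) (h4 : v ≤ 4) :
    min 1 ((4:ℝ) ^ γ) ≤ v ^ γ ∧ v ^ γ ≤ max 1 ((4:ℝ) ^ γ) := by
  rcases le_or_gt 0 γ with hγ | hγ
  · constructor
    · exact le_trans (min_le_left _ _) (Real.one_le_rpow h1 hγ)
    · exact le_trans (Real.rpow_le_rpow (by linarith) h4 hγ) (le_max_right _ _)
  · constructor
    · exact le_trans (min_le_right _ _)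
        (Real.rpow_le_rpow_of_nonpos (by linarith) h4 hγ.le)
    · exact le_trans (Real.rpow_le_one_of_one_le_of_nonpos h1 hγ.le) (le_max_left _ _)

lemma measurable_rpow_const' (γ : ℝ) : Measurable fun y : ℝ => y ^ γ := by
  have h : (fun y : ℝ => y ^ γ) = fun y =>
      if y < 0 then Real.exp (Real.log y * γ) * Real.cos (γ * Real.pi)
      else if y = 0 then (if γ = 0 then (1:ℝ) else 0) else Real.exp (Real.log y * γ) := by
    funext y
    rcases lt_trichotomy y 0 with h|h|h
    · rw [if_pos h, Real.rpow_def_of_neg h]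
    · subst h
      rw [if_neg (lt_irrefl _), if_pos rfl]
      rcases eq_or_ne γ 0 with h0|h0
      · rw [if_pos h0, h0, Real.rpow_zero]
      · rw [if_neg h0, Real.zero_rpow h0]
    · rw [if_neg (not_lt.mpr h.le), if_neg (ne_of_gt h), Real.rpow_def_of_pos h]
  rw [h]
  refine Measurable.ite measurableSet_Iio ?_ ?_
  · exact ((Real.measurable_log.mul_const γ).exp).mul_const _
  · refine Measurable.ite (MeasurableSet.singleton 0) measurable_const ?_
    exact (Real.measurable_log.mul_const γ).exp

set_option maxHeartbeats 1000000 in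
/-- Uniform convergence theorem for regularly varying functions -/
lemma uct (c : ℝ → ℝ) (γ : ℝ)
    (hpos : ∀ t : ℝ, 0 < t → 0 < c t)
    (hrv : ∀ x : ℝ, 0 < x → Tendsto (fun t => c (t * x) / c t) atTop (nhds (x ^ γ)))
    (hmeas : AEStronglyMeasurable c (volume.restrict (Set.Ioi 0)))
    (ε : ℝ) (hε : 0 < ε) :
    ∀ᶠ t : ℝ in atTop, ∀ x ∈ Set.Icc (1:ℝ) 2, |c (t * x) / c t - x ^ γ| ≤ ε := by
  by_contra hcon
  rw [Filter.not_eventually] at hcon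
  have H : ∀ m : ℕ, ∃ t, max (m:ℝ) 1 ≤ t ∧
      ¬ ∀ x ∈ Icc (1:ℝ) 2, |c (t*x)/c t - x^γ| ≤ ε := by
    intro m
    rcases frequently_atTop.mp hcon (max (m:ℝ) 1) with ⟨t, ht, hp⟩
    exact ⟨t, ht, hp⟩
  choose t ht hp using H
  have ht1 : ∀ m : ℕ, (1:ℝ) ≤ t m := fun m => le_trans (le_max_right _ _) (ht m)
  have ht0 : ∀ m : ℕ, (0:ℝ) < t m := fun m => lt_of_lt_of_le one_pos (ht1 m)
  have htne : ∀ m : ℕ, t m ≠ 0 := fun m => ne_of_gt (ht0 m)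
  have htm : ∀ m : ℕ, (m:ℝ) ≤ t m := fun m => le_trans (le_max_left _ _) (ht m)
  have httop : Tendsto t atTop atTop :=
    tendsto_atTop_mono htm tendsto_natCast_atTop_atTop
  have hx : ∀ m, ∃ x, x ∈ Icc (1:ℝ) 2 ∧ ε < |c (t m * x)/c (t m) - x^γ| := by
    intro m
    have := hp m
    push_neg at this
    obtain ⟨x, hx1, hx2⟩ := this
    exact ⟨x, hx1, hx2⟩
  choose x hxmem hxbad using hx
  -- constants
  set ρ : ℝ := min 1 ((4:ℝ)^γ) with hρdef
  have hρ : 0 < ρ := lt_min one_pos (Real.rpow_pos_of_pos (by norm_num) γ)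
  set P : ℝ := max 1 ((4:ℝ)^γ) with hPdef
  have hP1 : (1:ℝ) ≤ P := le_max_left _ _
  have hP : (0:ℝ) < 1 + P := by linarith
  set ε' : ℝ := min (ρ/2) (ε*ρ/(4*(1+P))) with hε'def
  have hε'1 : ε' ≤ ρ/2 := min_le_left _ _
  have hε'2 : ε' ≤ ε*ρ/(4*(1+P)) := min_le_right _ _
  have hε' : 0 < ε' := lt_min (by linarith) (div_pos (mul_pos hε hρ) (by nlinarith))
  -- measurable version
  set g := hmeas.mk c with hgdef
  have hgmeas : Measurable g := hmeas.stronglyMeasurable_mk.measurable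
  have hae : ∀ᵐ a : ℝ, a ∈ Ioi (0:ℝ) → c a = g a :=
    (ae_restrict_iff' measurableSet_Ioi).mp hmeas.ae_eq_mk
  set N := {a : ℝ | ¬ (a ∈ Ioi (0:ℝ) → c a = g a)} with hNdef
  have hN : volume N = 0 := hae
  have hNmem : ∀ {a : ℝ}, a ∉ N → 0 < a → c a = g a := by
    intro a ha h0
    by_contra hne
    exact ha (fun h => by tauto)
  -- Egorov-type family
  let Efam : (ℕ → ℝ) → ℕ → Set ℝ := fun b n =>
    Icc 1 4 ∩ ⋂ m, ⋂ (_ : n ≤ m), {y | |g (b m * y) / c (b m) - y ^ γ| ≤ ε'}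
  have hEmeas : ∀ b n, MeasurableSet (Efam b n) := by
    intro b n
    refine measurableSet_Icc.inter (MeasurableSet.iInter fun m => MeasurableSet.iInter fun _ => ?_)
    have : Measurable fun y : ℝ => |g (b m * y) / c (b m) - y ^ γ| := by
      apply Measurable.abs
      apply Measurable.sub
      · exact (hgmeas.comp (measurable_const_mul (b m))).div_const _
      · exact measurable_rpow_const' γ
    exact this measurableSet_Iic
  have hEmono : ∀ b, Monotone (Efam b) := by
    intro b n n' hnn'
    refine inter_subset_inter le_rfl ?_
    refine iInter_mono fun m => ?_
    intro y hy
    simp only [mem_iInter] at hy ⊢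
    exact fun h => hy (le_trans hnn' h)
  have hEbig : ∀ b : ℕ → ℝ, (∀ m, (1:ℝ) ≤ b m) → Tendsto b atTop atTop →
      ∃ n, ENNReal.ofReal (3 - 1/10) < volume (Efam b n) := by
    intro b hb1 hbtop
    have hb0 : ∀ m, (0:ℝ) < b m := fun m => lt_of_lt_of_le one_pos (hb1 m)
    set BigB := ⋃ m, (fun y => b m * y)⁻¹' N with hBigB
    have hBigBnull : volume BigB = 0 :=
      measure_iUnion_null fun m => null_preimage_mul (ne_of_gt (hb0 m)) hN
    have hcover : Icc (1:ℝ) 4 \ BigB ⊆ ⋃ n, Efam b n := by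
      intro y hy
      obtain ⟨hyI, hyB⟩ := hy
      have hy0 : (0:ℝ) < y := lt_of_lt_of_le one_pos hyI.1
      have heq : ∀ m, c (b m * y) = g (b m * y) := by
        intro m
        have : y ∉ (fun y => b m * y)⁻¹' N := fun h => hyB (mem_iUnion.mpr ⟨m, h⟩)
        exact hNmem this (mul_pos (hb0 m) hy0)
      have hseq : Tendsto (fun m => c (b m * y) / c (b m)) atTop (nhds (y ^ γ)) :=
        (hrv y hy0).comp hbtop
      obtain ⟨n₀, hn₀⟩ := (Metric.tendsto_atTop.mp hseq) ε' hε'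
      refine mem_iUnion.mpr ⟨n₀, hyI, ?_⟩
      simp only [mem_iInter]
      intro m hm
      have := hn₀ m hm
      rw [Real.dist_eq] at this
      simp only [mem_setOf_eq, ← heq m]
      exact le_of_lt this
    have hvol : ENNReal.ofReal 3 ≤ volume (⋃ n, Efam b n) := by
      refine le_trans ?_ (measure_mono hcover)
      rw [measure_diff_null hBigBnull, Real.volume_Icc]
      norm_num
    have hlt : ENNReal.ofReal (3 - 1/10) < volume (⋃ n, Efam b n) :=
      lt_of_lt_of_le (by rw [ENNReal.ofReal_lt_ofReal_iff] <;> norm_num) hvol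
    have := (tendsto_measure_iUnion_atTop (hEmono b)).eventually_const_lt hlt
    exact this.exists
  obtain ⟨n₁, hn₁⟩ := hEbig t ht1 httop
  have hb'1 : ∀ m, (1:ℝ) ≤ t m * x m := by
    intro m
    have := (hxmem m).1
    nlinarith [ht1 m]
  have hb'top : Tendsto (fun m => t m * x m) atTop atTop := by
    refine tendsto_atTop_mono (fun m => ?_) httop
    have := (hxmem m).1
    nlinarith [ht0 m]
  obtain ⟨n₂, hn₂⟩ := hEbig (fun m => t m * x m) hb'1 hb'top
  set m := max n₁ n₂ with hmdef
  set a := x m with hadef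
  obtain ⟨ha1, ha2⟩ := hxmem m
  have ha0 : (0:ℝ) < a := lt_of_lt_of_le one_pos ha1
  -- sets
  set A₁ := Efam t n₁ ∩ Icc a 4 with hA₁def
  set A₂ := Icc a 4 ∩ (fun u => a⁻¹ * u)⁻¹' (Efam (fun m => t m * x m) n₂) with hA₂def
  have hA₂meas : MeasurableSet A₂ :=
    measurableSet_Icc.inter ((hEmeas _ n₂).preimage (measurable_const_mul _))
  have hsub1 : Efam t n₁ ⊆ A₁ ∪ Ico 1 a := by
    intro y hy
    have hyI : y ∈ Icc (1:ℝ) 4 := hy.1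
    rcases le_or_gt a y with h | h
    · exact Or.inl ⟨hy, h, hyI.2⟩
    · exact Or.inr ⟨hyI.1, h⟩
  have hsub2 : (fun u => a⁻¹ * u)⁻¹' (Efam (fun m => t m * x m) n₂) ⊆ A₂ ∪ Ioc 4 (4*a) := by
    intro y hy
    have hyI : a⁻¹ * y ∈ Icc (1:ℝ) 4 := hy.1
    have h1 : a ≤ y := by
      have h := mul_le_mul_of_nonneg_left hyI.1 ha0.le
      rw [mul_one, ← mul_assoc, mul_inv_cancel₀ (ne_of_gt ha0), one_mul] at h
      exact h
    have h2 : y ≤ 4 * a := by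
      have h := mul_le_mul_of_nonneg_left hyI.2 ha0.le
      rw [← mul_assoc, mul_inv_cancel₀ (ne_of_gt ha0), one_mul] at h
      linarith
    rcases le_or_gt y 4 with h | h
    · exact Or.inl ⟨⟨h1, h⟩, hy⟩
    · exact Or.inr ⟨h, h2⟩
  have hkey1 : volume (Efam t n₁) ≤ volume A₁ + ENNReal.ofReal (a - 1) := by
    calc volume (Efam t n₁) ≤ volume (A₁ ∪ Ico 1 a) := measure_mono hsub1
    _ ≤ volume A₁ + volume (Ico 1 a) := measure_union_le _ _
    _ = volume A₁ + ENNReal.ofReal (a - 1) := by rw [Real.volume_Ico]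
  have hkey2 : ENNReal.ofReal a * volume (Efam (fun m => t m * x m) n₂) ≤
      volume A₂ + ENNReal.ofReal (4*a - 4) := by
    have hpre : volume ((fun u => a⁻¹ * u)⁻¹' (Efam (fun m => t m * x m) n₂)) =
        ENNReal.ofReal a * volume (Efam (fun m => t m * x m) n₂) := by
      rw [vol_preimage_mul (inv_ne_zero (ne_of_gt ha0)) (hEmeas _ n₂)]
      congr 1
      rw [inv_inv, abs_of_pos ha0]
    calc ENNReal.ofReal a * volume (Efam (fun m => t m * x m) n₂)
        = volume ((fun u => a⁻¹ * u)⁻¹' (Efam (fun m => t m * x m) n₂)) := hpre.symm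
      _ ≤ volume (A₂ ∪ Ioc 4 (4*a)) := measure_mono hsub2
      _ ≤ volume A₂ + volume (Ioc 4 (4*a)) := measure_union_le _ _
      _ = volume A₂ + ENNReal.ofReal (4*a - 4) := by rw [Real.volume_Ioc]
  have hinterpos : volume (A₁ ∩ A₂) ≠ 0 := by
    intro h0
    have hunion : volume (A₁ ∪ A₂) ≤ ENNReal.ofReal (4 - a) := by
      have : A₁ ∪ A₂ ⊆ Icc a 4 := by
        rintro y (hy | hy)
        exacts [hy.2, hy.1]
      calc volume (A₁ ∪ A₂) ≤ volume (Icc a 4) := measure_mono this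
        _ = ENNReal.ofReal (4 - a) := Real.volume_Icc
    have hsum : volume A₁ + volume A₂ ≤ ENNReal.ofReal (4 - a) := by
      rw [← measure_union_add_inter A₁ hA₂meas, h0, add_zero]
      exact hunion
    have hL : ENNReal.ofReal ((3 - 1/10) + a * (3 - 1/10)) ≤
        ENNReal.ofReal ((4 - a) + ((a-1) + (4*a-4))) := by
      calc ENNReal.ofReal ((3 - 1/10) + a * (3 - 1/10))
          = ENNReal.ofReal (3 - 1/10) + ENNReal.ofReal a * ENNReal.ofReal (3 - 1/10) := by
            rw [ENNReal.ofReal_add (by norm_num) (by positivity),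
              ← ENNReal.ofReal_mul (le_of_lt ha0)]
        _ ≤ volume (Efam t n₁) + ENNReal.ofReal a * volume (Efam (fun m => t m * x m) n₂) := by
            exact add_le_add hn₁.le (mul_le_mul_right hn₂.le _)
        _ ≤ (volume A₁ + ENNReal.ofReal (a - 1)) + (volume A₂ + ENNReal.ofReal (4*a - 4)) := by
            gcongr
        _ = (volume A₁ + volume A₂) + (ENNReal.ofReal (a-1) + ENNReal.ofReal (4*a - 4)) := by
            ring
        _ ≤ ENNReal.ofReal (4 - a) + (ENNReal.ofReal (a-1) + ENNReal.ofReal (4*a - 4)) := by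
            gcongr
        _ = ENNReal.ofReal ((4 - a) + ((a-1) + (4*a-4))) := by
            rw [ENNReal.ofReal_add (by linarith) (by linarith), ENNReal.ofReal_add (by linarith) (by linarith)]
    rw [ENNReal.ofReal_le_ofReal_iff (by linarith)] at hL
    nlinarith
  have hBnull : volume ((fun u => t m * u)⁻¹' N) = 0 :=
    null_preimage_mul (htne m) hN
  have hnonempty : ((A₁ ∩ A₂) \ ((fun u => t m * u)⁻¹' N)).Nonempty := by
    refine nonempty_of_measure_ne_zero (μ := volume) ?_
    rw [measure_diff_null hBnull]
    exact hinterpos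
  obtain ⟨u, ⟨huA₁, huA₂⟩, huB⟩ := hnonempty
  -- unpack
  obtain ⟨huE, huI⟩ := huA₁
  obtain ⟨huIcc14, huIcap⟩ := huE
  obtain ⟨_, hupre⟩ := huA₂
  have hu0 : (0:ℝ) < u := lt_of_lt_of_le one_pos huIcc14.1
  set v := a⁻¹ * u with hvdef
  obtain ⟨hvIcc, hvcap⟩ := hupre
  have hv0 : (0:ℝ) < v := lt_of_lt_of_le one_pos hvIcc.1
  have huav : u = a * v := by
    rw [hvdef, ← mul_assoc, mul_inv_cancel₀ (ne_of_gt ha0), one_mul]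
  have hcon1 : |g (t m * u) / c (t m) - u ^ γ| ≤ ε' := by
    have := mem_iInter.mp huIcap m
    exact mem_iInter.mp this (le_max_left _ _)
  have hcon2 : |g (t m * x m * v) / c (t m * x m) - v ^ γ| ≤ ε' := by
    have := mem_iInter.mp hvcap m
    exact mem_iInter.mp this (le_max_right _ _)
  have harg : t m * x m * v = t m * u := by
    rw [huav]
    ring
  have hgc : g (t m * u) = c (t m * u) := by
    have : t m * u ∉ N := huB
    exact (hNmem this (mul_pos (ht0 m) hu0)).symm
  rw [hgc] at hcon1
  rw [harg, hgc] at hcon2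
  -- numeric endgame
  have hct : (0:ℝ) < c (t m) := hpos _ (ht0 m)
  have hcta : (0:ℝ) < c (t m * x m) := hpos _ (mul_pos (ht0 m) (lt_of_lt_of_le one_pos ha1))
  have hctu : (0:ℝ) < c (t m * u) := hpos _ (mul_pos (ht0 m) hu0)
  set r₁ := c (t m * u) / c (t m) with hr₁
  set r₂ := c (t m * u) / c (t m * x m) with hr₂
  have hr₂pos : 0 < r₂ := div_pos hctu hcta
  have hq : c (t m * x m) / c (t m) = r₁ / r₂ := by
    rw [hr₁, hr₂]
    field_simp
  have hvγ : ρ ≤ v ^ γ := (rpow_mem_bounds γ hvIcc.1 hvIcc.2).1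
  have hr₂lb : ρ/2 ≤ r₂ := by
    have : |r₂ - v ^ γ| ≤ ε' := hcon2
    have h := abs_le.mp this
    linarith
  have haγP : a ^ γ ≤ P := (rpow_mem_bounds γ ha1 (by linarith)).2
  have haγ0 : 0 < a ^ γ := Real.rpow_pos_of_pos ha0 γ
  have huγ : u ^ γ = a ^ γ * v ^ γ := by
    rw [huav, Real.mul_rpow (le_of_lt ha0) (le_of_lt hv0)]
  have hnum : |r₁ - a ^ γ * r₂| ≤ ε' * (1 + P) := by
    have h1 : |r₁ - u ^ γ| ≤ ε' := hcon1
    have h2 : |u ^ γ - a ^ γ * r₂| = a ^ γ * |v ^ γ - r₂| := by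
      rw [huγ, ← mul_sub, abs_mul, abs_of_pos haγ0]
    have h3 : |v ^ γ - r₂| ≤ ε' := by rw [abs_sub_comm]; exact hcon2
    calc |r₁ - a ^ γ * r₂| ≤ |r₁ - u ^ γ| + |u ^ γ - a ^ γ * r₂| := abs_sub_le _ _ _
      _ ≤ ε' + a ^ γ * ε' := by
          rw [h2]
          gcongr
      _ ≤ ε' * (1 + P) := by nlinarith [le_of_lt hε']
  have hfinal : |c (t m * x m) / c (t m) - a ^ γ| ≤ ε / 2 := by
    rw [hq]
    have hr₂ne : r₂ ≠ 0 := ne_of_gt hr₂pos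
    have heq : r₁ / r₂ - a ^ γ = (r₁ - a ^ γ * r₂) / r₂ := by
      field_simp
    rw [heq, abs_div, abs_of_pos hr₂pos]
    have hstep : |r₁ - a ^ γ * r₂| / r₂ ≤ (ε' * (1 + P)) / (ρ/2) := by
      exact div_le_div₀ (le_of_lt (mul_pos hε' hP)) hnum (by linarith) hr₂lb
    refine le_trans hstep ?_
    rw [div_le_iff₀ (by linarith : (0:ℝ) < ρ/2)]
    have h4P : (0:ℝ) < 4*(1+P) := by linarith
    have hkey : ε' * (4*(1+P)) ≤ ε * ρ := (le_div_iff₀ h4P).mp hε'2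
    nlinarith
  have := hxbad m
  rw [← hadef] at this
  linarith [abs_nonneg (c (t m * x m) / c (t m) - a ^ γ), hfinal, this]

/-- Potter-type lower bound -/
lemma potter (c : ℝ → ℝ) (γ : ℝ) (hγ : -1 < γ)
    (hpos : ∀ t : ℝ, 0 < t → 0 < c t)
    (hrv : ∀ x : ℝ, 0 < x → Tendsto (fun t => c (t * x) / c t) atTop (nhds (x ^ γ)))
    (hmeas : AEStronglyMeasurable c (volume.restrict (Set.Ioi 0))) :
    ∃ T κ : ℝ, 1 ≤ T ∧ 0 < κ ∧
      ∀ t l : ℝ, T ≤ t → 1 ≤ l → κ * l ^ ((γ-1)/2) * c t ≤ c (t * l) := by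
  set σ := (γ-1)/2 with hσdef
  have hσγ : σ < γ := by rw [hσdef]; linarith
  set a := min 1 ((2:ℝ)^γ) with hadef
  have ha : 0 < a := lt_min one_pos (Real.rpow_pos_of_pos two_pos γ)
  have ha1 : a ≤ 1 := min_le_left _ _
  set b := max 1 ((2:ℝ)^σ) with hbdef
  have hb : 1 ≤ b := le_max_left _ _
  set κ := a/(2*b) with hκdef
  have hκ : 0 < κ := div_pos ha (by linarith)
  have hgap : (0:ℝ) < 2^γ - 2^σ :=
    sub_pos.mpr (Real.rpow_lt_rpow_of_exponent_lt one_lt_two hσγ)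
  set ε := min (a/2) ((2:ℝ)^γ - 2^σ) with hεdef
  have hε : 0 < ε := lt_min (by linarith) hgap
  have hε1 : ε ≤ a/2 := min_le_left _ _
  have hε2 : ε ≤ (2:ℝ)^γ - 2^σ := min_le_right _ _
  obtain ⟨T₀, hT₀⟩ := eventually_atTop.mp (uct c γ hpos hrv hmeas ε hε)
  set T := max T₀ 1 with hTdef
  have hT1 : (1:ℝ) ≤ T := le_max_right _ _
  have hTpos : (0:ℝ) < T := lt_of_lt_of_le one_pos hT1
  have hbase : ∀ t, T ≤ t → ∀ x, 1 ≤ x → x ≤ 2 → (x^γ - ε) * c t ≤ c (t*x) := by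
    intro t hTt x hx1 hx2
    have hct : 0 < c t := hpos t (lt_of_lt_of_le hTpos hTt)
    have h := hT₀ t (le_trans (le_max_left _ _) hTt) x ⟨hx1, hx2⟩
    have h2 := (abs_le.mp h).1
    have h3 : x ^ γ - ε ≤ c (t*x) / c t := by linarith
    calc (x^γ - ε) * c t ≤ (c (t*x) / c t) * c t := by
          apply mul_le_mul_of_nonneg_right h3 hct.le
      _ = c (t*x) := by field_simp
  have hrange : ∀ x : ℝ, 1 ≤ x → x ≤ 2 → a ≤ x^γ ∧ x^σ ≤ b := by
    intro x hx1 hx2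
    constructor
    · rcases le_or_gt 0 γ with hγ0 | hγ0
      · exact le_trans (min_le_left _ _) (Real.one_le_rpow hx1 hγ0)
      · exact le_trans (min_le_right _ _) (Real.rpow_le_rpow_of_nonpos (by linarith) hx2 hγ0.le)
    · rcases le_or_gt 0 σ with hσ0 | hσ0
      · exact le_trans (Real.rpow_le_rpow (by linarith) hx2 hσ0) (le_max_right _ _)
      · exact le_trans (Real.rpow_le_one_of_one_le_of_nonpos hx1 hσ0.le) (le_max_left _ _)
  have hbase' : ∀ t, T ≤ t → ∀ x, 1 ≤ x → x ≤ 2 → κ * x^σ * c t ≤ c (t*x) := by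
    intro t hTt x hx1 hx2
    have hct : 0 < c t := hpos t (lt_of_lt_of_le hTpos hTt)
    refine le_trans ?_ (hbase t hTt x hx1 hx2)
    have h1 : a ≤ x^γ := (hrange x hx1 hx2).1
    have h2 : x^σ ≤ b := (hrange x hx1 hx2).2
    have h3 : κ * x^σ ≤ κ * b := by
      apply mul_le_mul_of_nonneg_left h2 hκ.le
    have h4 : κ * b = a/2 := by
      rw [hκdef]
      field_simp
    have : κ * x^σ ≤ x^γ - ε := by
      rw [h4] at h3
      linarith
    exact mul_le_mul_of_nonneg_right this hct.le
  have hstep : (2:ℝ)^σ ≤ (2:ℝ)^γ - ε := by linarith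
  have main : ∀ n : ℕ, ∀ l : ℝ, 1 ≤ l → l ≤ 2^n → ∀ t, T ≤ t → κ * l^σ * c t ≤ c (t*l) := by
    intro n
    induction n with
    | zero =>
      intro l hl1 hl2 t hTt
      exact hbase' t hTt l hl1 (by norm_num at hl2; linarith)
    | succ n ih =>
      intro l hl1 hl2 t hTt
      rcases le_or_gt l 2 with h | h
      · exact hbase' t hTt l hl1 h
      · have hl2' : l/2 ≤ 2^n := by
          rw [div_le_iff₀ (by norm_num : (0:ℝ) < 2)]
          rw [pow_succ] at hl2
          linarith
        have hl1' : 1 ≤ l/2 := by linarith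
        have h2t : T ≤ t*2 := by nlinarith
        have hih := ih (l/2) hl1' hl2' (t*2) h2t
        have harg : (t*2)*(l/2) = t*l := by ring
        rw [harg] at hih
        have hc2t : (2:ℝ)^σ * c t ≤ c (t*2) := by
          have := hbase t hTt 2 (by norm_num) (le_refl 2)
          have h2σ := hstep
          have hct : 0 < c t := hpos t (lt_of_lt_of_le hTpos hTt)
          nlinarith
        have hl2σ : (0:ℝ) < (l/2)^σ := Real.rpow_pos_of_pos (by linarith) σ
        have hmono : κ * (l/2)^σ * ((2:ℝ)^σ * c t) ≤ κ * (l/2)^σ * c (t*2) := by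
          apply mul_le_mul_of_nonneg_left hc2t
          positivity
        have hcalc : κ * (l/2)^σ * ((2:ℝ)^σ * c t) = κ * l^σ * c t := by
          rw [Real.div_rpow (by linarith) (by norm_num)]
          have h2σne : ((2:ℝ)^σ) ≠ 0 := ne_of_gt (Real.rpow_pos_of_pos two_pos σ)
          field_simp
        rw [hcalc] at hmono
        exact le_trans hmono hih
  refine ⟨T, κ, hT1, hκ, fun t l hTt hl => ?_⟩
  obtain ⟨n, hn⟩ := pow_unbounded_of_one_lt l (one_lt_two (α := ℝ))
  exact main n l hl hn.le t hTt

theorem karamata_direct_above (c : ℝ → ℝ) (γ : ℝ) (hγ : -1 < γ)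
    (hpos : ∀ t : ℝ, 0 < t → 0 < c t)
    (hrv : ∀ x : ℝ, 0 < x → Tendsto (fun t => c (t * x) / c t) atTop (nhds (x ^ γ)))
    (hloc : LocallyIntegrableOn c (Set.Ioi 0))
    (t₀ : ℝ) (ht₀ : 0 < t₀) (hint : IntegrableOn c (Set.Ioc 0 t₀)) :
    Tendsto (fun t => t * c t / ∫ s in t₀..t, c s) atTop (nhds (γ + 1)) := by
  have hmeas : AEStronglyMeasurable c (volume.restrict (Set.Ioi 0)) := hloc.aestronglyMeasurable
  obtain ⟨T, κ, hT1, hκ, hpot⟩ := potter c γ hγ hpos hrv hmeas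
  set σ := (γ-1)/2 with hσdef
  have hσ1 : -1 < σ := by rw [hσdef]; linarith
  set T₁ := max T t₀ with hT₁def
  have hT₁T : T ≤ T₁ := le_max_left _ _
  have hT₁t₀ : t₀ ≤ T₁ := le_max_right _ _
  have hT₁1 : (1:ℝ) ≤ T₁ := le_trans hT1 hT₁T
  have hT₁0 : (0:ℝ) < T₁ := lt_of_lt_of_le one_pos hT₁1
  -- upper Potter-type bound
  have hub : ∀ s t : ℝ, T₁ ≤ s → s ≤ t → c s ≤ κ⁻¹ * (s/t)^σ * c t := by
    intro s t hs hst
    have hs0 : 0 < s := lt_of_lt_of_le hT₁0 hs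
    have ht0 : 0 < t := lt_of_lt_of_le hs0 hst
    have hl1 : 1 ≤ t/s := (one_le_div hs0).mpr hst
    have h := hpot s (t/s) (le_trans hT₁T hs) hl1
    rw [show s * (t/s) = t by field_simp] at h
    have hA : 0 < (t/s)^σ := Real.rpow_pos_of_pos (div_pos ht0 hs0) σ
    have hinv : (s/t)^σ = ((t/s)^σ)⁻¹ := by
      rw [show (s/t) = (t/s)⁻¹ by rw [inv_div], Real.inv_rpow (div_pos ht0 hs0).le]
    rw [hinv]
    have h2 : c s ≤ c t / (κ * (t/s)^σ) := by
      rw [le_div_iff₀ (mul_pos hκ hA)]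
      nlinarith [h]
    calc c s ≤ c t / (κ * (t/s)^σ) := h2
      _ = κ⁻¹ * ((t/s)^σ)⁻¹ * c t := by
          rw [div_eq_mul_inv, mul_inv]
          ring
  -- lower bound / divergence of t * c t
  have hlow : ∀ t, T₁ ≤ t → κ * (t/T₁)^σ * c T₁ ≤ c t := by
    intro t ht
    have h := hpot T₁ (t/T₁) hT₁T ((one_le_div hT₁0).mpr ht)
    rw [show T₁ * (t/T₁) = t by field_simp] at h
    exact h
  have hcT₁ : 0 < c T₁ := hpos _ hT₁0
  have hT₁σ : 0 < T₁^σ := Real.rpow_pos_of_pos hT₁0 σ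
  have hK : 0 < κ * c T₁ / T₁^σ := by positivity
  have hinf : Tendsto (fun t => t * c t) atTop atTop := by
    have h1 : Tendsto (fun t : ℝ => (κ * c T₁ / T₁^σ) * t^(1+σ)) atTop atTop :=
      (tendsto_rpow_atTop (by linarith)).const_mul_atTop hK
    apply tendsto_atTop_mono' atTop _ h1
    filter_upwards [eventually_ge_atTop T₁] with t ht
    have ht0 : 0 < t := lt_of_lt_of_le hT₁0 ht
    have hc : κ * (t/T₁)^σ * c T₁ ≤ c t := hlow t ht
    calc (κ * c T₁ / T₁^σ) * t^(1+σ) = t * (κ * (t/T₁)^σ * c T₁) := by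
          rw [Real.rpow_add ht0, Real.rpow_one, Real.div_rpow ht0.le hT₁0.le]
          field_simp
      _ ≤ t * c t := mul_le_mul_of_nonneg_left hc ht0.le
  -- integrability
  have hii : ∀ a b : ℝ, 0 < a → a ≤ b → IntervalIntegrable c volume a b := by
    intro a b ha hab
    rw [intervalIntegrable_iff_integrableOn_Ioc_of_le hab]
    refine ((hloc.integrableOn_compact_subset ?_ isCompact_Icc).mono_set Ioc_subset_Icc_self)
    exact fun x hx => lt_of_lt_of_le ha hx.1
  have hFpos : ∀ t, t₀ < t → 0 < ∫ s in t₀..t, c s := by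
    intro t ht
    exact intervalIntegral.intervalIntegral_pos_of_pos_on (hii t₀ t ht₀ ht.le)
      (fun x hx => hpos x (lt_trans ht₀ hx.1)) ht
  set C₀ := ∫ s in t₀..T₁, c s with hC₀def
  -- measurable modification
  set g := hmeas.mk c with hgdef
  have hgmeas : Measurable g := hmeas.stronglyMeasurable_mk.measurable
  have hae : ∀ᵐ a : ℝ, a ∈ Ioi (0:ℝ) → c a = g a :=
    (ae_restrict_iff' measurableSet_Ioi).mp hmeas.ae_eq_mk
  set N := {a : ℝ | ¬ (a ∈ Ioi (0:ℝ) → c a = g a)} with hNdef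
  have hN : volume N = 0 := hae
  have hNmem : ∀ {a : ℝ}, a ∉ N → 0 < a → c a = g a := by
    intro a ha h0
    by_contra hne
    exact ha (fun h => by tauto)
  -- dominated convergence
  set ind : ℝ → ℝ → ℝ := fun t => (Ioc (T₁/t) 1).indicator (fun u => c (t*u)/c t)
    with hinddef
  have hG : Tendsto (fun t => ∫ u in Ioc (0:ℝ) 1, ind t u) atTop
      (nhds (∫ u in Ioc (0:ℝ) 1, u^γ)) := by
    apply tendsto_integral_filter_of_dominated_convergence (fun u => κ⁻¹ * u^σ)
    · -- a.e. measurability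
      filter_upwards [eventually_ge_atTop (1:ℝ)] with t ht
      have ht0 : 0 < t := lt_of_lt_of_le one_pos ht
      set mk : ℝ → ℝ := (Ioc (T₁/t) 1).indicator (fun u => g (t*u)/c t) with hmkdef
      have hmkmeas : Measurable mk :=
        ((hgmeas.comp (measurable_const_mul t)).div_const _).indicator measurableSet_Ioc
      have hnull : volume ((fun u => t*u)⁻¹' N) = 0 := null_preimage_mul (ne_of_gt ht0) hN
      have heq : ∀ᵐ u : ℝ, mk u = ind t u := by
        rw [ae_iff]
        refine measure_mono_null (fun u hu => ?_) hnull
        simp only [mem_setOf_eq] at hu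
        by_contra hun
        apply hu
        rcases em (u ∈ Ioc (T₁/t) 1) with hmem | hmem
        · have hu0 : 0 < u := lt_of_le_of_lt (by positivity) hmem.1
          rw [hmkdef, hinddef]
          simp only [indicator_of_mem hmem]
          rw [hNmem hun (by positivity)]
        · rw [hmkdef, hinddef]
          simp only [indicator_of_notMem hmem]
      exact (hmkmeas.aestronglyMeasurable.congr (ae_restrict_of_ae heq))
    · -- bound
      filter_upwards [eventually_ge_atTop (max T₁ 1)] with t ht
      have htT₁ : T₁ ≤ t := le_trans (le_max_left _ _) ht
      have ht0 : 0 < t := lt_of_lt_of_le hT₁0 htT₁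
      filter_upwards [ae_restrict_mem measurableSet_Ioc] with u hu
      have hu0 : 0 < u := hu.1
      rcases em (u ∈ Ioc (T₁/t) 1) with hmem | hmem
      · have h1 : T₁ ≤ t * u := by
          have := hmem.1
          rw [div_lt_iff₀ ht0] at this
          linarith [this]
        have h2 : t * u ≤ t := by nlinarith [hmem.2]
        have h3 := hub (t*u) t h1 h2
        rw [show (t*u)/t = u by field_simp] at h3
        have hct : 0 < c t := hpos t ht0
        have hctu : 0 < c (t*u) := hpos _ (by positivity)
        rw [hinddef]
        simp only [indicator_of_mem hmem]
        rw [Real.norm_eq_abs, abs_of_pos (div_pos hctu hct), div_le_iff₀ hct]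
        linarith [h3]
      · rw [hinddef]
        simp only [indicator_of_notMem hmem]
        have : (0:ℝ) < κ⁻¹ * u^σ := by positivity
        simp only [norm_zero]
        linarith
    · -- integrable bound
      have hbi : IntervalIntegrable (fun x : ℝ => x^σ) volume 0 1 :=
        intervalIntegral.intervalIntegrable_rpow' hσ1
      rw [intervalIntegrable_iff_integrableOn_Ioc_of_le (by norm_num : (0:ℝ) ≤ 1)] at hbi
      exact hbi.const_mul _
    · -- pointwise limit
      filter_upwards [ae_restrict_mem measurableSet_Ioc] with u hu
      have hu0 : 0 < u := hu.1
      apply Tendsto.congr' _ (hrv u hu0)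
      filter_upwards [eventually_gt_atTop (max (T₁/u) 0)] with t ht
      have ht0 : 0 < t := lt_of_le_of_lt (le_max_right _ _) ht
      have h2 : T₁/u < t := lt_of_le_of_lt (le_max_left _ _) ht
      have h3 : T₁/t < u := by
        rw [div_lt_iff₀ hu0] at h2
        rw [div_lt_iff₀ ht0]
        linarith
      have hmem : u ∈ Ioc (T₁/t) 1 := ⟨h3, hu.2⟩
      show c (t*u)/c t = ind t u
      simp only [hinddef, Set.indicator_of_mem hmem]
  have hval : ∫ u in Ioc (0:ℝ) 1, u^γ = 1/(γ+1) := by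
    rw [← intervalIntegral.integral_of_le (by norm_num : (0:ℝ) ≤ 1)]
    rw [integral_rpow (Or.inl hγ)]
    rw [Real.one_rpow, Real.zero_rpow (by linarith : γ+1 ≠ 0)]
    norm_num
  rw [hval] at hG
  -- eventual identity and conclusion
  have hzero : Tendsto (fun t => C₀ / (t * c t)) atTop (nhds 0) :=
    Tendsto.div_atTop tendsto_const_nhds hinf
  have hsum := hzero.add hG
  rw [zero_add] at hsum
  have hD : Tendsto (fun t => (∫ s in t₀..t, c s) / (t * c t)) atTop (nhds (1/(γ+1))) := by
    apply Tendsto.congr' _ hsum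
    filter_upwards [eventually_ge_atTop (T₁+1)] with t ht
    have htT₁ : T₁ ≤ t := by linarith
    have ht0 : 0 < t := lt_of_lt_of_le hT₁0 htT₁
    have hct : 0 < c t := hpos t ht0
    have h1 : ∫ s in t₀..t, c s = C₀ + ∫ s in T₁..t, c s :=
      (intervalIntegral.integral_add_adjacent_intervals (hii t₀ T₁ ht₀ hT₁t₀)
        (hii T₁ t hT₁0 htT₁)).symm
    have h2 : ∫ u in (T₁/t)..(1:ℝ), c (t*u) = t⁻¹ * ∫ s in T₁..t, c s := by
      have h := intervalIntegral.integral_comp_mul_left (a := T₁/t) (b := 1)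
        (fun s => c s) (ne_of_gt ht0)
      rw [h, smul_eq_mul, mul_one, show t * (T₁/t) = T₁ by field_simp]
    have h3 : ∫ s in T₁..t, c s = t * ∫ u in (T₁/t)..(1:ℝ), c (t*u) := by
      rw [h2]
      field_simp
    have h4 : ∫ u in Ioc (0:ℝ) 1, ind t u = (∫ u in (T₁/t)..(1:ℝ), c (t*u)) / c t := by
      rw [hinddef]
      rw [setIntegral_indicator measurableSet_Ioc]
      rw [Set.Ioc_inter_Ioc, max_eq_right (by positivity : (0:ℝ) ≤ T₁/t), min_self]
      rw [intervalIntegral.integral_of_le (by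
        rw [div_le_one ht0]; linarith : T₁/t ≤ 1)]
      rw [← integral_div]
    show C₀ / (t * c t) + ∫ u in Ioc (0:ℝ) 1, ind t u = (∫ s in t₀..t, c s) / (t * c t)
    rw [h1, h3, h4, add_div]
    congr 1
    rw [mul_div_mul_left _ _ (ne_of_gt ht0)]
  have hne : (1/(γ+1) : ℝ) ≠ 0 := ne_of_gt (div_pos one_pos (by linarith))
  have hfin := hD.inv₀ hne
  rw [one_div, inv_inv] at hfin
  exact hfin.congr (fun t => inv_div _ _)
end
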